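/- Let X ⊆ ℝⁿ be a closed set and T : ℝⁿ → ℝᵐ a linear map with C_∞X ∩ ker(T) = {0}. Then T(X) is closed in ℝᵐ. -/
import Mathlib


open Metric Filter Set

/-- γ(x,R,X): sup of radii r ≥ 0 of open balls contained in B_R(x) \ X (sup ∅ = 0). -/
noncomputable def porGamma {E : Type*} [SeminormedAddCommGroup E] (x : E) (R : ℝ) (X : Set E) : ℝ :=
  sSup {r : ℝ | 0 ≤ r ∧ ∃ x' : E, ball x' r ⊆ ball x R \ X}

/-- Porosity of X at x: liminf_{R→0⁺} γ(x,R,X)/R. -/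
noncomputable def porosityAt {E : Type*} [SeminormedAddCommGroup E] (x : E) (X : Set E) : ℝ :=
  liminf (fun R => porGamma x R X / R) (nhdsWithin 0 (Ioi 0))

/-- X is porous if its porosity is positive at each of its points. -/
def IsPorous {E : Type*} [SeminormedAddCommGroup E] (X : Set E) : Prop :=
  ∀ x ∈ X, 0 < porosityAt x X

/-- X is σ-porous if it is a countable union of porous sets. -/
def IsSigmaPorous {E : Type*} [SeminormedAddCommGroup E] (X : Set E) : Prop :=
  ∃ f : ℕ → Set E, (∀ k, IsPorous (f k)) ∧ X = ⋃ k, f k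

/-- Asymptotic cone of X. -/
def asympCone {E : Type*} [SeminormedAddCommGroup E] [NormedSpace ℝ E] (X : Set E) : Set E :=
  {v | ∃ (x : ℕ → E) (t : ℕ → ℝ), (∀ k, x k ∈ X) ∧ (∀ k, 0 < t k) ∧
    Tendsto (fun k => ‖x k‖) atTop atTop ∧ Tendsto (fun k => t k • x k) atTop (nhds v)}

/-- If X is closed and C_∞X ∩ ker T = {0}, then T(X) is closed. -/
theorem closedImage_of_asympCone_ker {n m : ℕ} (X : Set (EuclideanSpace ℝ (Fin n)))
    (hX : IsClosed X)
    (T : EuclideanSpace ℝ (Fin n) →L[ℝ] EuclideanSpace ℝ (Fin m))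
    (hT : asympCone X ∩ (LinearMap.ker (T : EuclideanSpace ℝ (Fin n) →ₗ[ℝ] EuclideanSpace ℝ (Fin m)) : Set (EuclideanSpace ℝ (Fin n))) = {0}) :
    IsClosed (T '' X) := by
  have hseq : IsSeqClosed (T '' X) := by
    intro u p hu hup
    choose x hxX hxT using hu
    by_cases hb : ∃ C, ∀ k, ‖x k‖ ≤ C
    · obtain ⟨C, hC⟩ := hb
      obtain ⟨a, -, φ, hφ, ha⟩ := tendsto_subseq_of_bounded
        (Metric.isBounded_closedBall (x := (0 : EuclideanSpace ℝ (Fin n))) (r := C))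
        (fun k => by simpa [Metric.mem_closedBall] using hC k)
      have haX : a ∈ X := hX.mem_of_tendsto ha (Eventually.of_forall fun k => hxX _)
      refine ⟨a, haX, ?_⟩
      have h1 : Tendsto (fun k => T (x (φ k))) atTop (nhds (T a)) :=
        (T.continuous.tendsto a).comp ha
      have h2 : Tendsto (fun k => T (x (φ k))) atTop (nhds p) := by
        simp only [hxT]
        exact hup.comp hφ.tendsto_atTop
      exact tendsto_nhds_unique h1 h2
    · exfalso
      push_neg at hb
      have freq : ∀ j : ℕ, ∃ᶠ k in atTop, (j : ℝ) < ‖x k‖ := by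
        intro j
        rw [Filter.frequently_atTop]
        intro N
        obtain ⟨C, hC⟩ : ∃ C, ∀ k < N, ‖x k‖ ≤ C := by
          obtain ⟨C, hC⟩ := ((Finset.range N).image (fun k => ‖x k‖)).exists_le
          exact ⟨C, fun k hk => hC _ (Finset.mem_image_of_mem _ (Finset.mem_range.2 hk))⟩
        obtain ⟨k, hk⟩ := hb (max C j)
        refine ⟨k, ?_, lt_of_le_of_lt (le_max_right C j) hk⟩
        by_contra hkN
        exact absurd (hC k (lt_of_not_ge hkN)) (not_le.2 (lt_of_le_of_lt (le_max_left C j) hk))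
      obtain ⟨ψ, hψ, hψx⟩ := Filter.extraction_forall_of_frequently freq
      have hpos : ∀ j, 0 < ‖x (ψ j)‖ := fun j =>
        lt_of_le_of_lt (Nat.cast_nonneg j) (hψx j)
      have hnorm : Tendsto (fun j => ‖x (ψ j)‖) atTop atTop :=
        tendsto_atTop_mono (fun j => (hψx j).le) tendsto_natCast_atTop_atTop
      set w : ℕ → EuclideanSpace ℝ (Fin n) := fun j => ‖x (ψ j)‖⁻¹ • x (ψ j) with hw
      have hwb : ∀ j, w j ∈ Metric.closedBall (0 : EuclideanSpace ℝ (Fin n)) 1 := by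
        intro j
        simp only [Metric.mem_closedBall, dist_zero_right, hw, norm_smul, norm_inv, norm_norm]
        rw [inv_mul_cancel₀ (hpos j).ne']
      obtain ⟨v, -, φ, hφ, hv⟩ := tendsto_subseq_of_bounded Metric.isBounded_closedBall hwb
      have hvnorm : ‖v‖ = 1 := by
        have h1 : Tendsto (fun j => ‖w (φ j)‖) atTop (nhds ‖v‖) :=
          (continuous_norm.tendsto v).comp hv
        have h2 : ∀ j, ‖w (φ j)‖ = 1 := by
          intro j
          simp only [hw, norm_smul, norm_inv, norm_norm]
          rw [inv_mul_cancel₀ (hpos (φ j)).ne']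
        rw [funext h2] at h1
        exact tendsto_nhds_unique h1 tendsto_const_nhds
      have hnorm' : Tendsto (fun j => ‖x (ψ (φ j))‖) atTop atTop :=
        hnorm.comp hφ.tendsto_atTop
      have hvcone : v ∈ asympCone X := by
        refine ⟨fun j => x (ψ (φ j)), fun j => ‖x (ψ (φ j))‖⁻¹, fun j => hxX _,
          fun j => inv_pos.2 (hpos (φ j)), hnorm', hv⟩
      have hTv : T v = 0 := by
        have h1 : Tendsto (fun j => T (w (φ j))) atTop (nhds (T v)) :=
          (T.continuous.tendsto v).comp hv
        have h2 : Tendsto (fun j => T (w (φ j))) atTop (nhds (0 : EuclideanSpace ℝ (Fin m))) := by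
          have heq : ∀ j, T (w (φ j)) = ‖x (ψ (φ j))‖⁻¹ • T (x (ψ (φ j))) := fun j => by
            simp [hw]
          rw [funext heq]
          have htinv : Tendsto (fun j => ‖x (ψ (φ j))‖⁻¹) atTop (nhds 0) :=
            hnorm'.inv_tendsto_atTop
          have hTp : Tendsto (fun j => T (x (ψ (φ j)))) atTop (nhds p) := by
            simp only [hxT]
            exact hup.comp (hψ.comp hφ).tendsto_atTop
          simpa using htinv.smul hTp
        exact tendsto_nhds_unique h1 h2
      have : v ∈ asympCone X ∩ (LinearMap.ker (T : EuclideanSpace ℝ (Fin n) →ₗ[ℝ] EuclideanSpace ℝ (Fin m)) : Set (EuclideanSpace ℝ (Fin n))) :=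
        ⟨hvcone, by simpa [LinearMap.mem_ker] using hTv⟩
      rw [hT, Set.mem_singleton_iff] at this
      rw [this, norm_zero] at hvnorm
      norm_num at hvnorm
  exact hseq.isClosed
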